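/- For every k ≥ 1 and every cyclic snake kC_6 (with any string), and for every prescribed distance d ∈ {1, 2, 3}, there exists a labelling of kC_6 that is graceful if k is even and near graceful if k is odd, in which the label 0 is assigned to a vertex of the last cycle lying at distance d from the last cut vertex (i.e., 0 can be placed at any position of the last cycle other than the cut vertex). -/

import Mathlib

/-- The edge label induced by a vertex labelling `f`: the absolute difference of the
labels of the two endpoints. -/
def edgeLabel {V : Type*} (f : V → ℕ) : Sym2 V → ℕ :=
  Sym2.lift ⟨fun u v => Nat.dist (f u) (f v), fun u v => Nat.dist_comm (f u) (f v)⟩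

/-- `f` is a graceful labelling of the graph `G` with `m` edges: `f` is an injective
map into `{0,…,m}` and the induced edge labelling is a bijection from the edge set
onto `{1,…,m}`. -/
def IsGraceful {V : Type*} (G : SimpleGraph V) (m : ℕ) (f : V → ℕ) : Prop :=
  Function.Injective f ∧ (∀ v, f v ≤ m) ∧
    Set.InjOn (edgeLabel f) G.edgeSet ∧
    edgeLabel f '' G.edgeSet = Set.Icc 1 m

/-- `f` is a near graceful labelling of the graph `G` with `m` edges: `f` is an injective
map into `{0,…,m+1}` and the induced edge labelling is a bijection from the edge set
onto `{1,…,m-1,m}` or onto `{1,…,m-1,m+1}`. -/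
def IsNearGraceful {V : Type*} (G : SimpleGraph V) (m : ℕ) (f : V → ℕ) : Prop :=
  Function.Injective f ∧ (∀ v, f v ≤ m + 1) ∧
    Set.InjOn (edgeLabel f) G.edgeSet ∧
    (edgeLabel f '' G.edgeSet = Set.Icc 1 m ∨
      edgeLabel f '' G.edgeSet = Set.Icc 1 (m + 1) \ {m})
/-- Base adjacency for a chain of cycles: cycle `j` has length `c j`, and within each
cycle consecutive residues are adjacent. -/
def snakeBase (k : ℕ) (c : Fin k → ℕ) :
    (Σ j : Fin k, ZMod (c j)) → (Σ j : Fin k, ZMod (c j)) → Prop :=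
  fun p q => ∃ (j : Fin k) (x y : ZMod (c j)),
    p = ⟨j, x⟩ ∧ q = ⟨j, y⟩ ∧ (y = x + 1 ∨ x = y + 1)

theorem snakeBase_symm {k : ℕ} {c : Fin k → ℕ} :
    ∀ {p q}, snakeBase k c p q → snakeBase k c q p := by
  rintro p q ⟨j, x, y, rfl, rfl, h⟩
  exact ⟨j, y, x, rfl, rfl, h.symm⟩

/-- The gluing relation for a snake: for each `j` with `j + 1 < k`, the vertex of cycle `j`
at position `a j` is identified with the vertex of cycle `j+1` at position `0`. -/
def snakeGlue (k : ℕ) (c : Fin k → ℕ) (a : (j : Fin k) → ZMod (c j)) :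
    (Σ j : Fin k, ZMod (c j)) → (Σ j : Fin k, ZMod (c j)) → Prop :=
  fun p q => ∃ (j : ℕ) (hj : j + 1 < k),
    p = ⟨⟨j, Nat.lt_of_succ_lt hj⟩, a ⟨j, Nat.lt_of_succ_lt hj⟩⟩ ∧
    q = ⟨⟨j + 1, hj⟩, 0⟩

/-- The setoid on the disjoint union of the cycles generated by the gluing relation. -/
def snakeSetoid (k : ℕ) (c : Fin k → ℕ) (a : (j : Fin k) → ZMod (c j)) :
    Setoid (Σ j : Fin k, ZMod (c j)) :=
  Relation.EqvGen.setoid (snakeGlue k c a)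

/-- The snake graph: `k` cycles, cycle `j` of length `c j`, where cycle `j` and cycle `j+1`
are glued by identifying the vertex of cycle `j` at position `a j` with the vertex of
cycle `j+1` at position `0`. -/
def snakeGraph (k : ℕ) (c : Fin k → ℕ) (a : (j : Fin k) → ZMod (c j)) :
    SimpleGraph (Quotient (snakeSetoid k c a)) where
  Adj x y := x ≠ y ∧ ∃ p q, Quotient.mk (snakeSetoid k c a) p = x ∧
    Quotient.mk (snakeSetoid k c a) q = y ∧ snakeBase k c p q
  symm := by
    constructor
    rintro x y ⟨hxy, p, q, hp, hq, hb⟩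
    exact ⟨hxy.symm, q, p, hq, hp, snakeBase_symm hb⟩
  loopless := ⟨fun _ h => h.1 rfl⟩

/-- `G` is a cyclic snake `kCₙ`: `G` is isomorphic to a chain of `k` cycles of length `n`,
consecutive cycles glued at a vertex, where on each internal cycle the two cut vertices
are distinct (position `a j ≠ 0`). -/
def IsCyclicSnake {V : Type*} (G : SimpleGraph V) (k n : ℕ) : Prop :=
  ∃ a : Fin k → ZMod n,
    (∀ j : Fin k, 0 < j.val → j.val + 1 < k → a j ≠ 0) ∧
    Nonempty (G ≃g snakeGraph k (fun _ => n) a)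

/-- `G` is a cyclic snake `kCₙ` whose string is `(str 1, …, str (k-2))`: the `i`-th entry
of the string is the distance between the `i`-th and `(i+1)`-th cut vertices, which in the
concrete model is the cycle distance `min (a i).val (n - (a i).val)` between positions `0`
and `a i` on cycle `i`. -/
def IsCyclicSnakeWithString {V : Type*} (G : SimpleGraph V) (k n : ℕ) (str : ℕ → ℕ) : Prop :=
  ∃ a : Fin k → ZMod n,
    (∀ j : Fin k, 0 < j.val → j.val + 1 < k → a j ≠ 0) ∧
    (∀ j : Fin k, 0 < j.val → j.val + 1 < k →
      min (a j).val (n - (a j).val) = str j.val) ∧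
    Nonempty (G ≃g snakeGraph k (fun _ => n) a)


namespace SnakeProof

def Mk (k : ℕ) : ℕ := 6 * k + k % 2

def D (F : ℕ → ZMod 6 → ℕ) (j : ℕ) (x : ZMod 6) : ℕ := Nat.dist (F j x) (F j (x + 1))

structure Good (k : ℕ) (a : ℕ → ZMod 6) (i : ZMod 6) (F : ℕ → ZMod 6 → ℕ) : Prop where
  compat : ∀ j, j + 1 < k → F j (a j) = F (j+1) 0
  inj : ∀ j x j' x', j < k → j' < k → F j x = F j' x' →
      (j = j' ∧ x = x') ∨ (j' = j + 1 ∧ x = a j ∧ x' = 0) ∨ (j = j' + 1 ∧ x' = a j' ∧ x = 0)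
  bound : ∀ j x, j < k → F j x ≤ Mk k
  anchor : F (k-1) i = 0
  window : k % 2 = 1 → ∀ j x, j < k → F j x ≠ 6*k
  dmem : ∀ j x, j < k → 1 ≤ D F j x ∧ D F j x ≤ Mk k ∧ (k % 2 = 1 → D F j x ≠ 6*k)
  dinj : ∀ j x j' x', j < k → j' < k → D F j x = D F j' x' → j = j' ∧ x = x'
  dsurj : ∀ v, 1 ≤ v → v ≤ Mk k → (k % 2 = 1 → v ≠ 6*k) → ∃ j x, j < k ∧ D F j x = v

def B : ZMod 6 → ℕ := fun y =>
  if y = 0 then 0 else if y = 1 then 4 else if y = 2 then 1 else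
  if y = 3 then 3 else if y = 4 then 2 else 7

def baseF (i : ZMod 6) : ℕ → ZMod 6 → ℕ := fun _ x => B (x - i)

lemma base_D (i : ZMod 6) (j : ℕ) (x : ZMod 6) :
    D (baseF i) j x = Nat.dist (B (x - i)) (B (x - i + 1)) := by
  show Nat.dist (B (x - i)) (B (x + 1 - i)) = _
  congr 2
  ring

lemma base_good (a : ℕ → ZMod 6) (i : ZMod 6) : Good 1 a i (baseF i) := by
  have hBinj : ∀ y y' : ZMod 6, B y = B y' → y = y' := by decide
  refine ⟨?_, ?_, ?_, ?_, ?_, ?_, ?_, ?_⟩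
  · intro j hj; omega
  · intro j x j' x' hj hj' h
    left
    refine ⟨by omega, ?_⟩
    have h2 := hBinj _ _ h
    have h3 := congrArg (· + i) h2
    simpa using h3
  · intro j x _; show B (x - i) ≤ Mk 1
    generalize x - i = y; revert y; decide
  · show B (i - i) = 0
    simp [B]
  · intro _ j x _
    show B (x - i) ≠ 6
    generalize x - i = y; revert y; decide
  · intro j x _
    rw [base_D]
    generalize x - i = y
    revert y; decide
  · intro j x j' x' hj hj' h
    rw [base_D, base_D] at h
    refine ⟨by omega, ?_⟩
    have h2 : x - i = x' - i := by
      revert h; generalize x - i = y; generalize x' - i = y'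
      revert y y'; decide
    have h3 := congrArg (· + i) h2
    simpa using h3
  · intro v h1 h2 h3
    have h2' : v ≤ 7 := h2
    have h3' : v ≠ 6 := h3 rfl
    have : ∃ y : ZMod 6, Nat.dist (B y) (B (y+1)) = v := by
      interval_cases v <;> first
        | exact ⟨0, by decide⟩ | exact ⟨1, by decide⟩ | exact ⟨2, by decide⟩
        | exact ⟨3, by decide⟩ | exact ⟨4, by decide⟩ | exact ⟨5, by decide⟩
        | omega
    obtain ⟨y, hy⟩ := this
    exact ⟨0, y + i, by omega, by rw [base_D]; simpa using hy⟩

def tr (k c : ℕ) (cp : Bool) (v : ℕ) : ℕ := if cp then Mk k + c - v else v + c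

lemma tr_dist (k c : ℕ) (cp : Bool) (u v : ℕ) (hu : u ≤ Mk k) (hv : v ≤ Mk k) :
    Nat.dist (tr k c cp u) (tr k c cp v) = Nat.dist u v := by
  cases cp <;> simp [tr, Nat.dist] <;> omega

lemma extend (k : ℕ) (hk : 1 ≤ k) (a : ℕ → ZMod 6) (i' : ZMod 6) (F : ℕ → ZMod 6 → ℕ)
    (hF : Good k a (a (k-1)) F) (hq : a (k-1) ≠ 0 ∨ k = 1)
    (cp : Bool) (c : ℕ) (nb : ZMod 6 → ℕ)
    (hc1 : 1 ≤ c) (hc2 : Mk k + c ≤ Mk (k+1)) (hc3 : c ≤ 5)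
    (h0 : nb 0 = if cp then Mk k + c else c)
    (h1 : nb i' = 0)
    (h2 : ∀ x x', nb x = nb x' → x = x')
    (h3 : ∀ x, x ≠ 0 → x ≠ i' →
      (nb x < c ∨ (k % 2 = 1 ∧ nb x = (if cp then 1 + c else 6*k + c)) ∨ (Mk k + c < nb x ∧ nb x ≤ Mk (k+1))))
    (h4 : ∀ x, nb x ≤ Mk (k+1))
    (h5 : (k+1) % 2 = 1 → ∀ x, nb x ≠ 6*(k+1))
    (h6 : ∀ x, 1 ≤ Nat.dist (nb x) (nb (x+1)) ∧ Nat.dist (nb x) (nb (x+1)) ≤ Mk (k+1) ∧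
          ((k+1) % 2 = 1 → Nat.dist (nb x) (nb (x+1)) ≠ 6*(k+1)))
    (h7 : ∀ x x', Nat.dist (nb x) (nb (x+1)) = Nat.dist (nb x') (nb (x'+1)) → x = x')
    (h8 : ∀ x, 6*k + 2 ≤ Nat.dist (nb x) (nb (x+1)) ∨ (k % 2 = 1 ∧ Nat.dist (nb x) (nb (x+1)) = 6*k)
          ∨ (k % 2 = 0 ∧ Nat.dist (nb x) (nb (x+1)) = 6*k + 1))
    (h9 : ∀ v, 1 ≤ v → v ≤ Mk (k+1) → ((k+1) % 2 = 1 → v ≠ 6*(k+1)) →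
          (Mk k < v ∨ (k % 2 = 1 ∧ v = 6*k)) → ∃ x, Nat.dist (nb x) (nb (x+1)) = v) :
    Good (k+1) a i' (fun j x => if j = k then nb x else tr k c cp (F j x)) := by
  set F' : ℕ → ZMod 6 → ℕ := fun j x => if j = k then nb x else tr k c cp (F j x) with hF'
  have hFj : ∀ j x, j < k → F' j x = tr k c cp (F j x) := by
    intro j x hj; simp [hF', Nat.ne_of_lt hj]
  have hFk : ∀ x, F' k x = nb x := by intro x; simp [hF']
  have htr_mem : ∀ v, v ≤ Mk k → c ≤ tr k c cp v ∧ tr k c cp v ≤ Mk k + c := by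
    intro v hv; cases cp <;> simp [tr] <;> omega
  have htr_inj : ∀ u v, u ≤ Mk k → v ≤ Mk k → tr k c cp u = tr k c cp v → u = v := by
    intro u v hu hv; cases cp <;> simp [tr] <;> omega
  have htr_zero : tr k c cp 0 = if cp then Mk k + c else c := by
    cases cp <;> simp [tr]
  have hDold : ∀ j x, j < k → D F' j x = D F j x := by
    intro j x hj
    unfold D
    rw [hFj _ _ hj, hFj _ _ hj]
    exact tr_dist k c cp _ _ (hF.bound _ _ hj) (hF.bound _ _ hj)
  have hDnew : ∀ x, D F' k x = Nat.dist (nb x) (nb (x+1)) := by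
    intro x; unfold D; rw [hFk, hFk]
  -- key helper for mixed injectivity
  have hmix : ∀ j' x' x, j' < k → nb x = tr k c cp (F j' x') →
      (x = 0 ∧ j' = k - 1 ∧ x' = a (k-1)) := by
    intro j' x' x hj' heq
    have hb := hF.bound j' x' hj'
    have hm := htr_mem (F j' x') hb
    by_cases hx0 : x = 0
    · subst hx0
      rw [h0] at heq
      have hz : F j' x' = 0 := by
        revert heq; cases cp <;> simp [tr] <;> omega
      have h00 : F j' x' = F (k-1) (a (k-1)) := by rw [hz, hF.anchor]
      rcases hF.inj j' x' (k-1) (a (k-1)) hj' (by omega) h00 with ⟨hj, hx⟩ | ⟨hj, hx, hx2⟩ | ⟨hj, hx, hx2⟩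
      · exact ⟨rfl, hj, hx⟩
      · -- k-1 = j'+1 ∧ x' = a j' ∧ a (k-1) = 0
        rcases hq with hq | hq
        · exact absurd hx2 hq
        · omega
      · omega
    · by_cases hxi : x = i'
      · exfalso; rw [hxi, h1] at heq
        revert heq; cases cp <;> simp [tr] <;> omega
      · exfalso
        rcases h3 x hx0 hxi with h | ⟨hpar, hw⟩ | ⟨h, _⟩
        · omega
        · -- nb x is the window slot; F j' x' would be 6*k
          have : F j' x' = 6*k := by
            have hMk : Mk k = 6*k + 1 := by unfold Mk; omega
            revert heq; rw [hw]; cases cp <;> simp [tr, hMk] <;> omega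
          exact hF.window hpar j' x' hj' this
        · omega
  refine ⟨?_, ?_, ?_, ?_, ?_, ?_, ?_, ?_⟩
  · -- compat
    intro j hj
    by_cases hjk : j + 1 < k
    · rw [hFj _ _ (by omega), hFj _ _ hjk, hF.compat j hjk]
    · have hjeq : j = k - 1 := by omega
      have : j + 1 = k := by omega
      rw [hFj _ _ (by omega), this, hFk]
      rw [hjeq, hF.anchor, htr_zero, h0]
  · -- inj
    intro j x j' x' hj hj' heq
    by_cases hjk : j = k <;> by_cases hjk' : j' = k
    · subst hjk; subst hjk'
      rw [hFk, hFk] at heq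
      exact Or.inl ⟨rfl, h2 _ _ heq⟩
    · have hj'2 : j' < k := by omega
      rw [hjk, hFk, hFj _ _ hj'2] at heq
      obtain ⟨hx, hjj, hxx⟩ := hmix j' x' x hj'2 heq
      subst hjj
      exact Or.inr (Or.inr ⟨by omega, hxx, hx⟩)
    · have hj2 : j < k := by omega
      rw [hjk', hFk, hFj _ _ hj2] at heq
      obtain ⟨hx, hjj, hxx⟩ := hmix j x x' hj2 heq.symm
      subst hjj
      exact Or.inr (Or.inl ⟨by omega, hxx, hx⟩)
    · have hj2 : j < k := by omega
      have hj'2 : j' < k := by omega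
      rw [hFj _ _ hj2, hFj _ _ hj'2] at heq
      exact hF.inj j x j' x' hj2 hj'2
        (htr_inj _ _ (hF.bound _ _ hj2) (hF.bound _ _ hj'2) heq)
  · -- bound
    intro j x hj
    by_cases hjk : j = k
    · subst hjk; rw [hFk]; exact h4 x
    · rw [hFj _ _ (by omega)]
      have := htr_mem (F j x) (hF.bound _ _ (by omega))
      omega
  · -- anchor
    show F' (k+1-1) i' = 0
    have : k + 1 - 1 = k := by omega
    rw [this, hFk, h1]
  · -- window
    intro hpar j x hj
    by_cases hjk : j = k
    · subst hjk; rw [hFk]; exact h5 hpar x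
    · rw [hFj _ _ (by omega)]
      have := htr_mem (F j x) (hF.bound _ _ (by omega))
      have hMk : Mk k = 6*k := by unfold Mk; omega
      omega
  · -- dmem
    intro j x hj
    by_cases hjk : j = k
    · subst hjk; rw [hDnew]; exact h6 x
    · rw [hDold _ _ (by omega)]
      have := hF.dmem j x (by omega)
      unfold Mk at *; omega
  · -- dinj
    intro j x j' x' hj hj' heq
    by_cases hjk : j = k <;> by_cases hjk' : j' = k
    · subst hjk; subst hjk'
      rw [hDnew, hDnew] at heq
      exact ⟨rfl, h7 _ _ heq⟩
    · subst hjk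
      exfalso
      rw [hDnew, hDold _ _ (by omega)] at heq
      have h8x := h8 x
      have := hF.dmem j' x' (by omega)
      unfold Mk at *; omega
    · subst hjk'
      exfalso
      rw [hDold _ _ (by omega), hDnew] at heq
      have h8x := h8 x'
      have := hF.dmem j x (by omega)
      unfold Mk at *; omega
    · rw [hDold _ _ (by omega), hDold _ _ (by omega)] at heq
      exact hF.dinj j x j' x' (by omega) (by omega) heq
  · -- dsurj
    intro v hv1 hv2 hv3
    by_cases hvold : v ≤ Mk k ∧ (k % 2 = 1 → v ≠ 6*k)
    · obtain ⟨j, x, hj, hd⟩ := hF.dsurj v hv1 hvold.1 hvold.2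
      exact ⟨j, x, by omega, by rw [hDold _ _ hj]; exact hd⟩
    · have : Mk k < v ∨ (k % 2 = 1 ∧ v = 6*k) := by
        rcases Nat.lt_or_ge (Mk k) v with h | h
        · exact Or.inl h
        · right
          by_cases hp : k % 2 = 1
          · refine ⟨hp, ?_⟩
            by_contra hne
            exact hvold ⟨h, fun _ => hne⟩
          · exact absurd ⟨h, fun hh => absurd hh hp⟩ hvold
      obtain ⟨x, hx⟩ := h9 v hv1 hv2 hv3 this
      exact ⟨k, x, by omega, by rw [hDnew]; exact hx⟩

lemma zc6 : ∀ x : ZMod 6, x = 0 ∨ x = 1 ∨ x = 2 ∨ x = 3 ∨ x = 4 ∨ x = 5 := by decide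
lemma z01 : (0:ZMod 6)+1 = 1 := by decide
lemma z12 : (1:ZMod 6)+1 = 2 := by decide
lemma z23 : (2:ZMod 6)+1 = 3 := by decide
lemma z34 : (3:ZMod 6)+1 = 4 := by decide
lemma z45 : (4:ZMod 6)+1 = 5 := by decide
lemma z50 : (5:ZMod 6)+1 = 0 := by decide
lemma v0 : (0:ZMod 6).val = 0 := rfl
lemma v1 : (1:ZMod 6).val = 1 := rfl
lemma v2 : (2:ZMod 6).val = 2 := rfl
lemma v3 : (3:ZMod 6).val = 3 := rfl
lemma v4 : (4:ZMod 6).val = 4 := rfl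
lemma v5 : (5:ZMod 6).val = 5 := rfl

def nbEO1 (k : ℕ) : ℕ → ℕ
  | 0 => 6*k+4
  | 1 => 0
  | 2 => 6*k+7
  | 3 => 2
  | 4 => 6*k+5
  | _ => 3

lemma stepEO1 (k : ℕ) (hk : 1 ≤ k) (hpar : k % 2 = 0) (a : ℕ → ZMod 6)
    (F : ℕ → ZMod 6 → ℕ) (hF : Good k a (a (k-1)) F) (hq : a (k-1) ≠ 0 ∨ k = 1) :
    ∃ F', Good (k+1) a (1 : ZMod 6) F' := by
  refine ⟨_, extend k hk a (1 : ZMod 6) F hF hq true 4 (fun x => nbEO1 k x.val)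
    (by omega) (by unfold Mk; omega) (by omega) ?_ ?_ ?_ ?_ ?_ ?_ ?_ ?_ ?_ ?_⟩
  · simp [nbEO1, v0, Mk, hpar]
  · simp [nbEO1, v1]
  · intro x x'
    rcases zc6 x with rfl|rfl|rfl|rfl|rfl|rfl <;> rcases zc6 x' with rfl|rfl|rfl|rfl|rfl|rfl <;> simp [nbEO1, z01,z12,z23,z34,z45,z50, v0,v1,v2,v3,v4,v5] <;> omega
  · intro x hx0 hxi
    rcases zc6 x with rfl|rfl|rfl|rfl|rfl|rfl <;> simp_all [nbEO1, z01,z12,z23,z34,z45,z50, v0,v1,v2,v3,v4,v5, Mk] <;> omega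
  · intro x
    rcases zc6 x with rfl|rfl|rfl|rfl|rfl|rfl <;> simp [nbEO1, z01,z12,z23,z34,z45,z50, v0,v1,v2,v3,v4,v5, Mk, hpar] <;> omega
  · intro hp x
    rcases zc6 x with rfl|rfl|rfl|rfl|rfl|rfl <;> simp [nbEO1, z01,z12,z23,z34,z45,z50, v0,v1,v2,v3,v4,v5] <;> omega
  · intro x
    rcases zc6 x with rfl|rfl|rfl|rfl|rfl|rfl <;> simp [nbEO1, Nat.dist, z01,z12,z23,z34,z45,z50, v0,v1,v2,v3,v4,v5, Mk, hpar] <;> omega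
  · intro x x'
    rcases zc6 x with rfl|rfl|rfl|rfl|rfl|rfl <;> rcases zc6 x' with rfl|rfl|rfl|rfl|rfl|rfl <;> simp [nbEO1, Nat.dist, z01,z12,z23,z34,z45,z50, v0,v1,v2,v3,v4,v5] <;> omega
  · intro x
    rcases zc6 x with rfl|rfl|rfl|rfl|rfl|rfl <;> simp [nbEO1, Nat.dist, z01,z12,z23,z34,z45,z50, v0,v1,v2,v3,v4,v5, hpar] <;> omega
  · intro v hv1 hv2 hv3 hv4
    have hv : v = 6*k+1 ∨ v = 6*k+2 ∨ v = 6*k+3 ∨ v = 6*k+4 ∨ v = 6*k+5 ∨ v = 6*k+7 := by unfold Mk at hv2 hv4; omega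
    rcases hv with hw0|hw1|hw2|hw3|hw4|hw5
    · exact ⟨(5 : ZMod 6), by simp [hw0, nbEO1, Nat.dist, z01,z12,z23,z34,z45,z50, v0,v1,v2,v3,v4,v5] <;> omega⟩
    · exact ⟨(4 : ZMod 6), by simp [hw1, nbEO1, Nat.dist, z01,z12,z23,z34,z45,z50, v0,v1,v2,v3,v4,v5] <;> omega⟩
    · exact ⟨(3 : ZMod 6), by simp [hw2, nbEO1, Nat.dist, z01,z12,z23,z34,z45,z50, v0,v1,v2,v3,v4,v5] <;> omega⟩
    · exact ⟨(0 : ZMod 6), by simp [hw3, nbEO1, Nat.dist, z01,z12,z23,z34,z45,z50, v0,v1,v2,v3,v4,v5] <;> omega⟩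
    · exact ⟨(2 : ZMod 6), by simp [hw4, nbEO1, Nat.dist, z01,z12,z23,z34,z45,z50, v0,v1,v2,v3,v4,v5] <;> omega⟩
    · exact ⟨(1 : ZMod 6), by simp [hw5, nbEO1, Nat.dist, z01,z12,z23,z34,z45,z50, v0,v1,v2,v3,v4,v5] <;> omega⟩

def nbEO2 (k : ℕ) : ℕ → ℕ
  | 0 => 2
  | 1 => 6*k+7
  | 2 => 0
  | 3 => 6*k+4
  | 4 => 1
  | _ => 6*k+3

lemma stepEO2 (k : ℕ) (hk : 1 ≤ k) (hpar : k % 2 = 0) (a : ℕ → ZMod 6)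
    (F : ℕ → ZMod 6 → ℕ) (hF : Good k a (a (k-1)) F) (hq : a (k-1) ≠ 0 ∨ k = 1) :
    ∃ F', Good (k+1) a (2 : ZMod 6) F' := by
  refine ⟨_, extend k hk a (2 : ZMod 6) F hF hq false 2 (fun x => nbEO2 k x.val)
    (by omega) (by unfold Mk; omega) (by omega) ?_ ?_ ?_ ?_ ?_ ?_ ?_ ?_ ?_ ?_⟩
  · simp [nbEO2, v0, Mk, hpar]
  · simp [nbEO2, v2]
  · intro x x'
    rcases zc6 x with rfl|rfl|rfl|rfl|rfl|rfl <;> rcases zc6 x' with rfl|rfl|rfl|rfl|rfl|rfl <;> simp [nbEO2, z01,z12,z23,z34,z45,z50, v0,v1,v2,v3,v4,v5] <;> omega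
  · intro x hx0 hxi
    rcases zc6 x with rfl|rfl|rfl|rfl|rfl|rfl <;> simp_all [nbEO2, z01,z12,z23,z34,z45,z50, v0,v1,v2,v3,v4,v5, Mk] <;> omega
  · intro x
    rcases zc6 x with rfl|rfl|rfl|rfl|rfl|rfl <;> simp [nbEO2, z01,z12,z23,z34,z45,z50, v0,v1,v2,v3,v4,v5, Mk, hpar] <;> omega
  · intro hp x
    rcases zc6 x with rfl|rfl|rfl|rfl|rfl|rfl <;> simp [nbEO2, z01,z12,z23,z34,z45,z50, v0,v1,v2,v3,v4,v5] <;> omega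
  · intro x
    rcases zc6 x with rfl|rfl|rfl|rfl|rfl|rfl <;> simp [nbEO2, Nat.dist, z01,z12,z23,z34,z45,z50, v0,v1,v2,v3,v4,v5, Mk, hpar] <;> omega
  · intro x x'
    rcases zc6 x with rfl|rfl|rfl|rfl|rfl|rfl <;> rcases zc6 x' with rfl|rfl|rfl|rfl|rfl|rfl <;> simp [nbEO2, Nat.dist, z01,z12,z23,z34,z45,z50, v0,v1,v2,v3,v4,v5] <;> omega
  · intro x
    rcases zc6 x with rfl|rfl|rfl|rfl|rfl|rfl <;> simp [nbEO2, Nat.dist, z01,z12,z23,z34,z45,z50, v0,v1,v2,v3,v4,v5, hpar] <;> omega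
  · intro v hv1 hv2 hv3 hv4
    have hv : v = 6*k+1 ∨ v = 6*k+2 ∨ v = 6*k+3 ∨ v = 6*k+4 ∨ v = 6*k+5 ∨ v = 6*k+7 := by unfold Mk at hv2 hv4; omega
    rcases hv with hw0|hw1|hw2|hw3|hw4|hw5
    · exact ⟨(5 : ZMod 6), by simp [hw0, nbEO2, Nat.dist, z01,z12,z23,z34,z45,z50, v0,v1,v2,v3,v4,v5] <;> omega⟩
    · exact ⟨(4 : ZMod 6), by simp [hw1, nbEO2, Nat.dist, z01,z12,z23,z34,z45,z50, v0,v1,v2,v3,v4,v5] <;> omega⟩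
    · exact ⟨(3 : ZMod 6), by simp [hw2, nbEO2, Nat.dist, z01,z12,z23,z34,z45,z50, v0,v1,v2,v3,v4,v5] <;> omega⟩
    · exact ⟨(2 : ZMod 6), by simp [hw3, nbEO2, Nat.dist, z01,z12,z23,z34,z45,z50, v0,v1,v2,v3,v4,v5] <;> omega⟩
    · exact ⟨(0 : ZMod 6), by simp [hw4, nbEO2, Nat.dist, z01,z12,z23,z34,z45,z50, v0,v1,v2,v3,v4,v5] <;> omega⟩
    · exact ⟨(1 : ZMod 6), by simp [hw5, nbEO2, Nat.dist, z01,z12,z23,z34,z45,z50, v0,v1,v2,v3,v4,v5] <;> omega⟩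

def nbEO3 (k : ℕ) : ℕ → ℕ
  | 0 => 6*k+3
  | 1 => 1
  | 2 => 6*k+4
  | 3 => 0
  | 4 => 6*k+7
  | _ => 2

lemma stepEO3 (k : ℕ) (hk : 1 ≤ k) (hpar : k % 2 = 0) (a : ℕ → ZMod 6)
    (F : ℕ → ZMod 6 → ℕ) (hF : Good k a (a (k-1)) F) (hq : a (k-1) ≠ 0 ∨ k = 1) :
    ∃ F', Good (k+1) a (3 : ZMod 6) F' := by
  refine ⟨_, extend k hk a (3 : ZMod 6) F hF hq true 3 (fun x => nbEO3 k x.val)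
    (by omega) (by unfold Mk; omega) (by omega) ?_ ?_ ?_ ?_ ?_ ?_ ?_ ?_ ?_ ?_⟩
  · simp [nbEO3, v0, Mk, hpar]
  · simp [nbEO3, v3]
  · intro x x'
    rcases zc6 x with rfl|rfl|rfl|rfl|rfl|rfl <;> rcases zc6 x' with rfl|rfl|rfl|rfl|rfl|rfl <;> simp [nbEO3, z01,z12,z23,z34,z45,z50, v0,v1,v2,v3,v4,v5] <;> omega
  · intro x hx0 hxi
    rcases zc6 x with rfl|rfl|rfl|rfl|rfl|rfl <;> simp_all [nbEO3, z01,z12,z23,z34,z45,z50, v0,v1,v2,v3,v4,v5, Mk] <;> omega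
  · intro x
    rcases zc6 x with rfl|rfl|rfl|rfl|rfl|rfl <;> simp [nbEO3, z01,z12,z23,z34,z45,z50, v0,v1,v2,v3,v4,v5, Mk, hpar] <;> omega
  · intro hp x
    rcases zc6 x with rfl|rfl|rfl|rfl|rfl|rfl <;> simp [nbEO3, z01,z12,z23,z34,z45,z50, v0,v1,v2,v3,v4,v5] <;> omega
  · intro x
    rcases zc6 x with rfl|rfl|rfl|rfl|rfl|rfl <;> simp [nbEO3, Nat.dist, z01,z12,z23,z34,z45,z50, v0,v1,v2,v3,v4,v5, Mk, hpar] <;> omega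
  · intro x x'
    rcases zc6 x with rfl|rfl|rfl|rfl|rfl|rfl <;> rcases zc6 x' with rfl|rfl|rfl|rfl|rfl|rfl <;> simp [nbEO3, Nat.dist, z01,z12,z23,z34,z45,z50, v0,v1,v2,v3,v4,v5] <;> omega
  · intro x
    rcases zc6 x with rfl|rfl|rfl|rfl|rfl|rfl <;> simp [nbEO3, Nat.dist, z01,z12,z23,z34,z45,z50, v0,v1,v2,v3,v4,v5, hpar] <;> omega
  · intro v hv1 hv2 hv3 hv4
    have hv : v = 6*k+1 ∨ v = 6*k+2 ∨ v = 6*k+3 ∨ v = 6*k+4 ∨ v = 6*k+5 ∨ v = 6*k+7 := by unfold Mk at hv2 hv4; omega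
    rcases hv with hw0|hw1|hw2|hw3|hw4|hw5
    · exact ⟨(5 : ZMod 6), by simp [hw0, nbEO3, Nat.dist, z01,z12,z23,z34,z45,z50, v0,v1,v2,v3,v4,v5] <;> omega⟩
    · exact ⟨(0 : ZMod 6), by simp [hw1, nbEO3, Nat.dist, z01,z12,z23,z34,z45,z50, v0,v1,v2,v3,v4,v5] <;> omega⟩
    · exact ⟨(1 : ZMod 6), by simp [hw2, nbEO3, Nat.dist, z01,z12,z23,z34,z45,z50, v0,v1,v2,v3,v4,v5] <;> omega⟩
    · exact ⟨(2 : ZMod 6), by simp [hw3, nbEO3, Nat.dist, z01,z12,z23,z34,z45,z50, v0,v1,v2,v3,v4,v5] <;> omega⟩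
    · exact ⟨(4 : ZMod 6), by simp [hw4, nbEO3, Nat.dist, z01,z12,z23,z34,z45,z50, v0,v1,v2,v3,v4,v5] <;> omega⟩
    · exact ⟨(3 : ZMod 6), by simp [hw5, nbEO3, Nat.dist, z01,z12,z23,z34,z45,z50, v0,v1,v2,v3,v4,v5] <;> omega⟩

def nbEO4 (k : ℕ) : ℕ → ℕ
  | 0 => 2
  | 1 => 6*k+3
  | 2 => 1
  | 3 => 6*k+4
  | 4 => 0
  | _ => 6*k+7

lemma stepEO4 (k : ℕ) (hk : 1 ≤ k) (hpar : k % 2 = 0) (a : ℕ → ZMod 6)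
    (F : ℕ → ZMod 6 → ℕ) (hF : Good k a (a (k-1)) F) (hq : a (k-1) ≠ 0 ∨ k = 1) :
    ∃ F', Good (k+1) a (4 : ZMod 6) F' := by
  refine ⟨_, extend k hk a (4 : ZMod 6) F hF hq false 2 (fun x => nbEO4 k x.val)
    (by omega) (by unfold Mk; omega) (by omega) ?_ ?_ ?_ ?_ ?_ ?_ ?_ ?_ ?_ ?_⟩
  · simp [nbEO4, v0, Mk, hpar]
  · simp [nbEO4, v4]
  · intro x x'
    rcases zc6 x with rfl|rfl|rfl|rfl|rfl|rfl <;> rcases zc6 x' with rfl|rfl|rfl|rfl|rfl|rfl <;> simp [nbEO4, z01,z12,z23,z34,z45,z50, v0,v1,v2,v3,v4,v5] <;> omega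
  · intro x hx0 hxi
    rcases zc6 x with rfl|rfl|rfl|rfl|rfl|rfl <;> simp_all [nbEO4, z01,z12,z23,z34,z45,z50, v0,v1,v2,v3,v4,v5, Mk] <;> omega
  · intro x
    rcases zc6 x with rfl|rfl|rfl|rfl|rfl|rfl <;> simp [nbEO4, z01,z12,z23,z34,z45,z50, v0,v1,v2,v3,v4,v5, Mk, hpar] <;> omega
  · intro hp x
    rcases zc6 x with rfl|rfl|rfl|rfl|rfl|rfl <;> simp [nbEO4, z01,z12,z23,z34,z45,z50, v0,v1,v2,v3,v4,v5] <;> omega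
  · intro x
    rcases zc6 x with rfl|rfl|rfl|rfl|rfl|rfl <;> simp [nbEO4, Nat.dist, z01,z12,z23,z34,z45,z50, v0,v1,v2,v3,v4,v5, Mk, hpar] <;> omega
  · intro x x'
    rcases zc6 x with rfl|rfl|rfl|rfl|rfl|rfl <;> rcases zc6 x' with rfl|rfl|rfl|rfl|rfl|rfl <;> simp [nbEO4, Nat.dist, z01,z12,z23,z34,z45,z50, v0,v1,v2,v3,v4,v5] <;> omega
  · intro x
    rcases zc6 x with rfl|rfl|rfl|rfl|rfl|rfl <;> simp [nbEO4, Nat.dist, z01,z12,z23,z34,z45,z50, v0,v1,v2,v3,v4,v5, hpar] <;> omega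
  · intro v hv1 hv2 hv3 hv4
    have hv : v = 6*k+1 ∨ v = 6*k+2 ∨ v = 6*k+3 ∨ v = 6*k+4 ∨ v = 6*k+5 ∨ v = 6*k+7 := by unfold Mk at hv2 hv4; omega
    rcases hv with hw0|hw1|hw2|hw3|hw4|hw5
    · exact ⟨(0 : ZMod 6), by simp [hw0, nbEO4, Nat.dist, z01,z12,z23,z34,z45,z50, v0,v1,v2,v3,v4,v5] <;> omega⟩
    · exact ⟨(1 : ZMod 6), by simp [hw1, nbEO4, Nat.dist, z01,z12,z23,z34,z45,z50, v0,v1,v2,v3,v4,v5] <;> omega⟩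
    · exact ⟨(2 : ZMod 6), by simp [hw2, nbEO4, Nat.dist, z01,z12,z23,z34,z45,z50, v0,v1,v2,v3,v4,v5] <;> omega⟩
    · exact ⟨(3 : ZMod 6), by simp [hw3, nbEO4, Nat.dist, z01,z12,z23,z34,z45,z50, v0,v1,v2,v3,v4,v5] <;> omega⟩
    · exact ⟨(5 : ZMod 6), by simp [hw4, nbEO4, Nat.dist, z01,z12,z23,z34,z45,z50, v0,v1,v2,v3,v4,v5] <;> omega⟩
    · exact ⟨(4 : ZMod 6), by simp [hw5, nbEO4, Nat.dist, z01,z12,z23,z34,z45,z50, v0,v1,v2,v3,v4,v5] <;> omega⟩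

def nbEO5 (k : ℕ) : ℕ → ℕ
  | 0 => 6*k+4
  | 1 => 3
  | 2 => 6*k+5
  | 3 => 2
  | 4 => 6*k+7
  | _ => 0

lemma stepEO5 (k : ℕ) (hk : 1 ≤ k) (hpar : k % 2 = 0) (a : ℕ → ZMod 6)
    (F : ℕ → ZMod 6 → ℕ) (hF : Good k a (a (k-1)) F) (hq : a (k-1) ≠ 0 ∨ k = 1) :
    ∃ F', Good (k+1) a (5 : ZMod 6) F' := by
  refine ⟨_, extend k hk a (5 : ZMod 6) F hF hq true 4 (fun x => nbEO5 k x.val)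
    (by omega) (by unfold Mk; omega) (by omega) ?_ ?_ ?_ ?_ ?_ ?_ ?_ ?_ ?_ ?_⟩
  · simp [nbEO5, v0, Mk, hpar]
  · simp [nbEO5, v5]
  · intro x x'
    rcases zc6 x with rfl|rfl|rfl|rfl|rfl|rfl <;> rcases zc6 x' with rfl|rfl|rfl|rfl|rfl|rfl <;> simp [nbEO5, z01,z12,z23,z34,z45,z50, v0,v1,v2,v3,v4,v5] <;> omega
  · intro x hx0 hxi
    rcases zc6 x with rfl|rfl|rfl|rfl|rfl|rfl <;> simp_all [nbEO5, z01,z12,z23,z34,z45,z50, v0,v1,v2,v3,v4,v5, Mk] <;> omega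
  · intro x
    rcases zc6 x with rfl|rfl|rfl|rfl|rfl|rfl <;> simp [nbEO5, z01,z12,z23,z34,z45,z50, v0,v1,v2,v3,v4,v5, Mk, hpar] <;> omega
  · intro hp x
    rcases zc6 x with rfl|rfl|rfl|rfl|rfl|rfl <;> simp [nbEO5, z01,z12,z23,z34,z45,z50, v0,v1,v2,v3,v4,v5] <;> omega
  · intro x
    rcases zc6 x with rfl|rfl|rfl|rfl|rfl|rfl <;> simp [nbEO5, Nat.dist, z01,z12,z23,z34,z45,z50, v0,v1,v2,v3,v4,v5, Mk, hpar] <;> omega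
  · intro x x'
    rcases zc6 x with rfl|rfl|rfl|rfl|rfl|rfl <;> rcases zc6 x' with rfl|rfl|rfl|rfl|rfl|rfl <;> simp [nbEO5, Nat.dist, z01,z12,z23,z34,z45,z50, v0,v1,v2,v3,v4,v5] <;> omega
  · intro x
    rcases zc6 x with rfl|rfl|rfl|rfl|rfl|rfl <;> simp [nbEO5, Nat.dist, z01,z12,z23,z34,z45,z50, v0,v1,v2,v3,v4,v5, hpar] <;> omega
  · intro v hv1 hv2 hv3 hv4
    have hv : v = 6*k+1 ∨ v = 6*k+2 ∨ v = 6*k+3 ∨ v = 6*k+4 ∨ v = 6*k+5 ∨ v = 6*k+7 := by unfold Mk at hv2 hv4; omega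
    rcases hv with hw0|hw1|hw2|hw3|hw4|hw5
    · exact ⟨(0 : ZMod 6), by simp [hw0, nbEO5, Nat.dist, z01,z12,z23,z34,z45,z50, v0,v1,v2,v3,v4,v5] <;> omega⟩
    · exact ⟨(1 : ZMod 6), by simp [hw1, nbEO5, Nat.dist, z01,z12,z23,z34,z45,z50, v0,v1,v2,v3,v4,v5] <;> omega⟩
    · exact ⟨(2 : ZMod 6), by simp [hw2, nbEO5, Nat.dist, z01,z12,z23,z34,z45,z50, v0,v1,v2,v3,v4,v5] <;> omega⟩
    · exact ⟨(5 : ZMod 6), by simp [hw3, nbEO5, Nat.dist, z01,z12,z23,z34,z45,z50, v0,v1,v2,v3,v4,v5] <;> omega⟩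
    · exact ⟨(3 : ZMod 6), by simp [hw4, nbEO5, Nat.dist, z01,z12,z23,z34,z45,z50, v0,v1,v2,v3,v4,v5] <;> omega⟩
    · exact ⟨(4 : ZMod 6), by simp [hw5, nbEO5, Nat.dist, z01,z12,z23,z34,z45,z50, v0,v1,v2,v3,v4,v5] <;> omega⟩

def nbOE1 (k : ℕ) : ℕ → ℕ
  | 0 => 6*k+3
  | 1 => 0
  | 2 => 6*k+6
  | 3 => 1
  | 4 => 6*k+5
  | _ => 3

lemma stepOE1 (k : ℕ) (hk : 1 ≤ k) (hpar : k % 2 = 1) (a : ℕ → ZMod 6)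
    (F : ℕ → ZMod 6 → ℕ) (hF : Good k a (a (k-1)) F) (hq : a (k-1) ≠ 0 ∨ k = 1) :
    ∃ F', Good (k+1) a (1 : ZMod 6) F' := by
  refine ⟨_, extend k hk a (1 : ZMod 6) F hF hq true 2 (fun x => nbOE1 k x.val)
    (by omega) (by unfold Mk; omega) (by omega) ?_ ?_ ?_ ?_ ?_ ?_ ?_ ?_ ?_ ?_⟩
  · simp [nbOE1, v0, Mk, hpar]
  · simp [nbOE1, v1]
  · intro x x'
    rcases zc6 x with rfl|rfl|rfl|rfl|rfl|rfl <;> rcases zc6 x' with rfl|rfl|rfl|rfl|rfl|rfl <;> simp [nbOE1, z01,z12,z23,z34,z45,z50, v0,v1,v2,v3,v4,v5] <;> omega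
  · intro x hx0 hxi
    rcases zc6 x with rfl|rfl|rfl|rfl|rfl|rfl <;> simp_all [nbOE1, z01,z12,z23,z34,z45,z50, v0,v1,v2,v3,v4,v5, Mk] <;> omega
  · intro x
    rcases zc6 x with rfl|rfl|rfl|rfl|rfl|rfl <;> simp [nbOE1, z01,z12,z23,z34,z45,z50, v0,v1,v2,v3,v4,v5, Mk, hpar] <;> omega
  · intro hp x
    rcases zc6 x with rfl|rfl|rfl|rfl|rfl|rfl <;> simp [nbOE1, z01,z12,z23,z34,z45,z50, v0,v1,v2,v3,v4,v5] <;> omega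
  · intro x
    rcases zc6 x with rfl|rfl|rfl|rfl|rfl|rfl <;> simp [nbOE1, Nat.dist, z01,z12,z23,z34,z45,z50, v0,v1,v2,v3,v4,v5, Mk, hpar] <;> omega
  · intro x x'
    rcases zc6 x with rfl|rfl|rfl|rfl|rfl|rfl <;> rcases zc6 x' with rfl|rfl|rfl|rfl|rfl|rfl <;> simp [nbOE1, Nat.dist, z01,z12,z23,z34,z45,z50, v0,v1,v2,v3,v4,v5] <;> omega
  · intro x
    rcases zc6 x with rfl|rfl|rfl|rfl|rfl|rfl <;> simp [nbOE1, Nat.dist, z01,z12,z23,z34,z45,z50, v0,v1,v2,v3,v4,v5, hpar] <;> omega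
  · intro v hv1 hv2 hv3 hv4
    have hv : v = 6*k ∨ v = 6*k+2 ∨ v = 6*k+3 ∨ v = 6*k+4 ∨ v = 6*k+5 ∨ v = 6*k+6 := by unfold Mk at hv2 hv4; omega
    rcases hv with hw0|hw1|hw2|hw3|hw4|hw5
    · exact ⟨(5 : ZMod 6), by simp [hw0, nbOE1, Nat.dist, z01,z12,z23,z34,z45,z50, v0,v1,v2,v3,v4,v5] <;> omega⟩
    · exact ⟨(4 : ZMod 6), by simp [hw1, nbOE1, Nat.dist, z01,z12,z23,z34,z45,z50, v0,v1,v2,v3,v4,v5] <;> omega⟩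
    · exact ⟨(0 : ZMod 6), by simp [hw2, nbOE1, Nat.dist, z01,z12,z23,z34,z45,z50, v0,v1,v2,v3,v4,v5] <;> omega⟩
    · exact ⟨(3 : ZMod 6), by simp [hw3, nbOE1, Nat.dist, z01,z12,z23,z34,z45,z50, v0,v1,v2,v3,v4,v5] <;> omega⟩
    · exact ⟨(2 : ZMod 6), by simp [hw4, nbOE1, Nat.dist, z01,z12,z23,z34,z45,z50, v0,v1,v2,v3,v4,v5] <;> omega⟩
    · exact ⟨(1 : ZMod 6), by simp [hw5, nbOE1, Nat.dist, z01,z12,z23,z34,z45,z50, v0,v1,v2,v3,v4,v5] <;> omega⟩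

def nbOE2 (k : ℕ) : ℕ → ℕ
  | 0 => 2
  | 1 => 6*k+2
  | 2 => 0
  | 3 => 6*k+6
  | 4 => 1
  | _ => 6*k+5

lemma stepOE2 (k : ℕ) (hk : 1 ≤ k) (hpar : k % 2 = 1) (a : ℕ → ZMod 6)
    (F : ℕ → ZMod 6 → ℕ) (hF : Good k a (a (k-1)) F) (hq : a (k-1) ≠ 0 ∨ k = 1) :
    ∃ F', Good (k+1) a (2 : ZMod 6) F' := by
  refine ⟨_, extend k hk a (2 : ZMod 6) F hF hq false 2 (fun x => nbOE2 k x.val)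
    (by omega) (by unfold Mk; omega) (by omega) ?_ ?_ ?_ ?_ ?_ ?_ ?_ ?_ ?_ ?_⟩
  · simp [nbOE2, v0, Mk, hpar]
  · simp [nbOE2, v2]
  · intro x x'
    rcases zc6 x with rfl|rfl|rfl|rfl|rfl|rfl <;> rcases zc6 x' with rfl|rfl|rfl|rfl|rfl|rfl <;> simp [nbOE2, z01,z12,z23,z34,z45,z50, v0,v1,v2,v3,v4,v5] <;> omega
  · intro x hx0 hxi
    rcases zc6 x with rfl|rfl|rfl|rfl|rfl|rfl <;> simp_all [nbOE2, z01,z12,z23,z34,z45,z50, v0,v1,v2,v3,v4,v5, Mk] <;> omega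
  · intro x
    rcases zc6 x with rfl|rfl|rfl|rfl|rfl|rfl <;> simp [nbOE2, z01,z12,z23,z34,z45,z50, v0,v1,v2,v3,v4,v5, Mk, hpar] <;> omega
  · intro hp x
    rcases zc6 x with rfl|rfl|rfl|rfl|rfl|rfl <;> simp [nbOE2, z01,z12,z23,z34,z45,z50, v0,v1,v2,v3,v4,v5] <;> omega
  · intro x
    rcases zc6 x with rfl|rfl|rfl|rfl|rfl|rfl <;> simp [nbOE2, Nat.dist, z01,z12,z23,z34,z45,z50, v0,v1,v2,v3,v4,v5, Mk, hpar] <;> omega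
  · intro x x'
    rcases zc6 x with rfl|rfl|rfl|rfl|rfl|rfl <;> rcases zc6 x' with rfl|rfl|rfl|rfl|rfl|rfl <;> simp [nbOE2, Nat.dist, z01,z12,z23,z34,z45,z50, v0,v1,v2,v3,v4,v5] <;> omega
  · intro x
    rcases zc6 x with rfl|rfl|rfl|rfl|rfl|rfl <;> simp [nbOE2, Nat.dist, z01,z12,z23,z34,z45,z50, v0,v1,v2,v3,v4,v5, hpar] <;> omega
  · intro v hv1 hv2 hv3 hv4
    have hv : v = 6*k ∨ v = 6*k+2 ∨ v = 6*k+3 ∨ v = 6*k+4 ∨ v = 6*k+5 ∨ v = 6*k+6 := by unfold Mk at hv2 hv4; omega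
    rcases hv with hw0|hw1|hw2|hw3|hw4|hw5
    · exact ⟨(0 : ZMod 6), by simp [hw0, nbOE2, Nat.dist, z01,z12,z23,z34,z45,z50, v0,v1,v2,v3,v4,v5] <;> omega⟩
    · exact ⟨(1 : ZMod 6), by simp [hw1, nbOE2, Nat.dist, z01,z12,z23,z34,z45,z50, v0,v1,v2,v3,v4,v5] <;> omega⟩
    · exact ⟨(5 : ZMod 6), by simp [hw2, nbOE2, Nat.dist, z01,z12,z23,z34,z45,z50, v0,v1,v2,v3,v4,v5] <;> omega⟩
    · exact ⟨(4 : ZMod 6), by simp [hw3, nbOE2, Nat.dist, z01,z12,z23,z34,z45,z50, v0,v1,v2,v3,v4,v5] <;> omega⟩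
    · exact ⟨(3 : ZMod 6), by simp [hw4, nbOE2, Nat.dist, z01,z12,z23,z34,z45,z50, v0,v1,v2,v3,v4,v5] <;> omega⟩
    · exact ⟨(2 : ZMod 6), by simp [hw5, nbOE2, Nat.dist, z01,z12,z23,z34,z45,z50, v0,v1,v2,v3,v4,v5] <;> omega⟩

def nbOE3 (k : ℕ) : ℕ → ℕ
  | 0 => 6*k+3
  | 1 => 1
  | 2 => 6*k+5
  | 3 => 0
  | 4 => 6*k+6
  | _ => 3

lemma stepOE3 (k : ℕ) (hk : 1 ≤ k) (hpar : k % 2 = 1) (a : ℕ → ZMod 6)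
    (F : ℕ → ZMod 6 → ℕ) (hF : Good k a (a (k-1)) F) (hq : a (k-1) ≠ 0 ∨ k = 1) :
    ∃ F', Good (k+1) a (3 : ZMod 6) F' := by
  refine ⟨_, extend k hk a (3 : ZMod 6) F hF hq true 2 (fun x => nbOE3 k x.val)
    (by omega) (by unfold Mk; omega) (by omega) ?_ ?_ ?_ ?_ ?_ ?_ ?_ ?_ ?_ ?_⟩
  · simp [nbOE3, v0, Mk, hpar]
  · simp [nbOE3, v3]
  · intro x x'
    rcases zc6 x with rfl|rfl|rfl|rfl|rfl|rfl <;> rcases zc6 x' with rfl|rfl|rfl|rfl|rfl|rfl <;> simp [nbOE3, z01,z12,z23,z34,z45,z50, v0,v1,v2,v3,v4,v5] <;> omega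
  · intro x hx0 hxi
    rcases zc6 x with rfl|rfl|rfl|rfl|rfl|rfl <;> simp_all [nbOE3, z01,z12,z23,z34,z45,z50, v0,v1,v2,v3,v4,v5, Mk] <;> omega
  · intro x
    rcases zc6 x with rfl|rfl|rfl|rfl|rfl|rfl <;> simp [nbOE3, z01,z12,z23,z34,z45,z50, v0,v1,v2,v3,v4,v5, Mk, hpar] <;> omega
  · intro hp x
    rcases zc6 x with rfl|rfl|rfl|rfl|rfl|rfl <;> simp [nbOE3, z01,z12,z23,z34,z45,z50, v0,v1,v2,v3,v4,v5] <;> omega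
  · intro x
    rcases zc6 x with rfl|rfl|rfl|rfl|rfl|rfl <;> simp [nbOE3, Nat.dist, z01,z12,z23,z34,z45,z50, v0,v1,v2,v3,v4,v5, Mk, hpar] <;> omega
  · intro x x'
    rcases zc6 x with rfl|rfl|rfl|rfl|rfl|rfl <;> rcases zc6 x' with rfl|rfl|rfl|rfl|rfl|rfl <;> simp [nbOE3, Nat.dist, z01,z12,z23,z34,z45,z50, v0,v1,v2,v3,v4,v5] <;> omega
  · intro x
    rcases zc6 x with rfl|rfl|rfl|rfl|rfl|rfl <;> simp [nbOE3, Nat.dist, z01,z12,z23,z34,z45,z50, v0,v1,v2,v3,v4,v5, hpar] <;> omega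
  · intro v hv1 hv2 hv3 hv4
    have hv : v = 6*k ∨ v = 6*k+2 ∨ v = 6*k+3 ∨ v = 6*k+4 ∨ v = 6*k+5 ∨ v = 6*k+6 := by unfold Mk at hv2 hv4; omega
    rcases hv with hw0|hw1|hw2|hw3|hw4|hw5
    · exact ⟨(5 : ZMod 6), by simp [hw0, nbOE3, Nat.dist, z01,z12,z23,z34,z45,z50, v0,v1,v2,v3,v4,v5] <;> omega⟩
    · exact ⟨(0 : ZMod 6), by simp [hw1, nbOE3, Nat.dist, z01,z12,z23,z34,z45,z50, v0,v1,v2,v3,v4,v5] <;> omega⟩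
    · exact ⟨(4 : ZMod 6), by simp [hw2, nbOE3, Nat.dist, z01,z12,z23,z34,z45,z50, v0,v1,v2,v3,v4,v5] <;> omega⟩
    · exact ⟨(1 : ZMod 6), by simp [hw3, nbOE3, Nat.dist, z01,z12,z23,z34,z45,z50, v0,v1,v2,v3,v4,v5] <;> omega⟩
    · exact ⟨(2 : ZMod 6), by simp [hw4, nbOE3, Nat.dist, z01,z12,z23,z34,z45,z50, v0,v1,v2,v3,v4,v5] <;> omega⟩
    · exact ⟨(3 : ZMod 6), by simp [hw5, nbOE3, Nat.dist, z01,z12,z23,z34,z45,z50, v0,v1,v2,v3,v4,v5] <;> omega⟩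

def nbOE4 (k : ℕ) : ℕ → ℕ
  | 0 => 2
  | 1 => 6*k+5
  | 2 => 1
  | 3 => 6*k+6
  | 4 => 0
  | _ => 6*k+2

lemma stepOE4 (k : ℕ) (hk : 1 ≤ k) (hpar : k % 2 = 1) (a : ℕ → ZMod 6)
    (F : ℕ → ZMod 6 → ℕ) (hF : Good k a (a (k-1)) F) (hq : a (k-1) ≠ 0 ∨ k = 1) :
    ∃ F', Good (k+1) a (4 : ZMod 6) F' := by
  refine ⟨_, extend k hk a (4 : ZMod 6) F hF hq false 2 (fun x => nbOE4 k x.val)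
    (by omega) (by unfold Mk; omega) (by omega) ?_ ?_ ?_ ?_ ?_ ?_ ?_ ?_ ?_ ?_⟩
  · simp [nbOE4, v0, Mk, hpar]
  · simp [nbOE4, v4]
  · intro x x'
    rcases zc6 x with rfl|rfl|rfl|rfl|rfl|rfl <;> rcases zc6 x' with rfl|rfl|rfl|rfl|rfl|rfl <;> simp [nbOE4, z01,z12,z23,z34,z45,z50, v0,v1,v2,v3,v4,v5] <;> omega
  · intro x hx0 hxi
    rcases zc6 x with rfl|rfl|rfl|rfl|rfl|rfl <;> simp_all [nbOE4, z01,z12,z23,z34,z45,z50, v0,v1,v2,v3,v4,v5, Mk] <;> omega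
  · intro x
    rcases zc6 x with rfl|rfl|rfl|rfl|rfl|rfl <;> simp [nbOE4, z01,z12,z23,z34,z45,z50, v0,v1,v2,v3,v4,v5, Mk, hpar] <;> omega
  · intro hp x
    rcases zc6 x with rfl|rfl|rfl|rfl|rfl|rfl <;> simp [nbOE4, z01,z12,z23,z34,z45,z50, v0,v1,v2,v3,v4,v5] <;> omega
  · intro x
    rcases zc6 x with rfl|rfl|rfl|rfl|rfl|rfl <;> simp [nbOE4, Nat.dist, z01,z12,z23,z34,z45,z50, v0,v1,v2,v3,v4,v5, Mk, hpar] <;> omega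
  · intro x x'
    rcases zc6 x with rfl|rfl|rfl|rfl|rfl|rfl <;> rcases zc6 x' with rfl|rfl|rfl|rfl|rfl|rfl <;> simp [nbOE4, Nat.dist, z01,z12,z23,z34,z45,z50, v0,v1,v2,v3,v4,v5] <;> omega
  · intro x
    rcases zc6 x with rfl|rfl|rfl|rfl|rfl|rfl <;> simp [nbOE4, Nat.dist, z01,z12,z23,z34,z45,z50, v0,v1,v2,v3,v4,v5, hpar] <;> omega
  · intro v hv1 hv2 hv3 hv4
    have hv : v = 6*k ∨ v = 6*k+2 ∨ v = 6*k+3 ∨ v = 6*k+4 ∨ v = 6*k+5 ∨ v = 6*k+6 := by unfold Mk at hv2 hv4; omega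
    rcases hv with hw0|hw1|hw2|hw3|hw4|hw5
    · exact ⟨(5 : ZMod 6), by simp [hw0, nbOE4, Nat.dist, z01,z12,z23,z34,z45,z50, v0,v1,v2,v3,v4,v5] <;> omega⟩
    · exact ⟨(4 : ZMod 6), by simp [hw1, nbOE4, Nat.dist, z01,z12,z23,z34,z45,z50, v0,v1,v2,v3,v4,v5] <;> omega⟩
    · exact ⟨(0 : ZMod 6), by simp [hw2, nbOE4, Nat.dist, z01,z12,z23,z34,z45,z50, v0,v1,v2,v3,v4,v5] <;> omega⟩
    · exact ⟨(1 : ZMod 6), by simp [hw3, nbOE4, Nat.dist, z01,z12,z23,z34,z45,z50, v0,v1,v2,v3,v4,v5] <;> omega⟩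
    · exact ⟨(2 : ZMod 6), by simp [hw4, nbOE4, Nat.dist, z01,z12,z23,z34,z45,z50, v0,v1,v2,v3,v4,v5] <;> omega⟩
    · exact ⟨(3 : ZMod 6), by simp [hw5, nbOE4, Nat.dist, z01,z12,z23,z34,z45,z50, v0,v1,v2,v3,v4,v5] <;> omega⟩

def nbOE5 (k : ℕ) : ℕ → ℕ
  | 0 => 6*k+3
  | 1 => 3
  | 2 => 6*k+5
  | 3 => 1
  | 4 => 6*k+6
  | _ => 0

lemma stepOE5 (k : ℕ) (hk : 1 ≤ k) (hpar : k % 2 = 1) (a : ℕ → ZMod 6)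
    (F : ℕ → ZMod 6 → ℕ) (hF : Good k a (a (k-1)) F) (hq : a (k-1) ≠ 0 ∨ k = 1) :
    ∃ F', Good (k+1) a (5 : ZMod 6) F' := by
  refine ⟨_, extend k hk a (5 : ZMod 6) F hF hq true 2 (fun x => nbOE5 k x.val)
    (by omega) (by unfold Mk; omega) (by omega) ?_ ?_ ?_ ?_ ?_ ?_ ?_ ?_ ?_ ?_⟩
  · simp [nbOE5, v0, Mk, hpar]
  · simp [nbOE5, v5]
  · intro x x'
    rcases zc6 x with rfl|rfl|rfl|rfl|rfl|rfl <;> rcases zc6 x' with rfl|rfl|rfl|rfl|rfl|rfl <;> simp [nbOE5, z01,z12,z23,z34,z45,z50, v0,v1,v2,v3,v4,v5] <;> omega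
  · intro x hx0 hxi
    rcases zc6 x with rfl|rfl|rfl|rfl|rfl|rfl <;> simp_all [nbOE5, z01,z12,z23,z34,z45,z50, v0,v1,v2,v3,v4,v5, Mk] <;> omega
  · intro x
    rcases zc6 x with rfl|rfl|rfl|rfl|rfl|rfl <;> simp [nbOE5, z01,z12,z23,z34,z45,z50, v0,v1,v2,v3,v4,v5, Mk, hpar] <;> omega
  · intro hp x
    rcases zc6 x with rfl|rfl|rfl|rfl|rfl|rfl <;> simp [nbOE5, z01,z12,z23,z34,z45,z50, v0,v1,v2,v3,v4,v5] <;> omega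
  · intro x
    rcases zc6 x with rfl|rfl|rfl|rfl|rfl|rfl <;> simp [nbOE5, Nat.dist, z01,z12,z23,z34,z45,z50, v0,v1,v2,v3,v4,v5, Mk, hpar] <;> omega
  · intro x x'
    rcases zc6 x with rfl|rfl|rfl|rfl|rfl|rfl <;> rcases zc6 x' with rfl|rfl|rfl|rfl|rfl|rfl <;> simp [nbOE5, Nat.dist, z01,z12,z23,z34,z45,z50, v0,v1,v2,v3,v4,v5] <;> omega
  · intro x
    rcases zc6 x with rfl|rfl|rfl|rfl|rfl|rfl <;> simp [nbOE5, Nat.dist, z01,z12,z23,z34,z45,z50, v0,v1,v2,v3,v4,v5, hpar] <;> omega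
  · intro v hv1 hv2 hv3 hv4
    have hv : v = 6*k ∨ v = 6*k+2 ∨ v = 6*k+3 ∨ v = 6*k+4 ∨ v = 6*k+5 ∨ v = 6*k+6 := by unfold Mk at hv2 hv4; omega
    rcases hv with hw0|hw1|hw2|hw3|hw4|hw5
    · exact ⟨(0 : ZMod 6), by simp [hw0, nbOE5, Nat.dist, z01,z12,z23,z34,z45,z50, v0,v1,v2,v3,v4,v5] <;> omega⟩
    · exact ⟨(1 : ZMod 6), by simp [hw1, nbOE5, Nat.dist, z01,z12,z23,z34,z45,z50, v0,v1,v2,v3,v4,v5] <;> omega⟩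
    · exact ⟨(5 : ZMod 6), by simp [hw2, nbOE5, Nat.dist, z01,z12,z23,z34,z45,z50, v0,v1,v2,v3,v4,v5] <;> omega⟩
    · exact ⟨(2 : ZMod 6), by simp [hw3, nbOE5, Nat.dist, z01,z12,z23,z34,z45,z50, v0,v1,v2,v3,v4,v5] <;> omega⟩
    · exact ⟨(3 : ZMod 6), by simp [hw4, nbOE5, Nat.dist, z01,z12,z23,z34,z45,z50, v0,v1,v2,v3,v4,v5] <;> omega⟩
    · exact ⟨(4 : ZMod 6), by simp [hw5, nbOE5, Nat.dist, z01,z12,z23,z34,z45,z50, v0,v1,v2,v3,v4,v5] <;> omega⟩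

lemma val_cases (i : ZMod 6) (hi : i ≠ 0) :
    i = 1 ∨ i = 2 ∨ i = 3 ∨ i = 4 ∨ i = 5 := by
  revert hi; revert i; decide

lemma main (k : ℕ) (hk : 1 ≤ k) :
    ∀ (a : ℕ → ZMod 6), (∀ j, 0 < j → j + 1 < k → a j ≠ 0) →
    ∀ i : ZMod 6, (i ≠ 0 ∨ k = 1) → ∃ F, Good k a i F := by
  induction k, hk using Nat.le_induction with
  | base =>
    intro a _ i _
    exact ⟨baseF i, base_good a i⟩
  | succ k hk IH =>
    intro a ha i hi
    have hi' : i ≠ 0 := by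
      rcases hi with h | h
      · exact h
      · omega
    have hq : a (k-1) ≠ 0 ∨ k = 1 := by
      rcases Nat.lt_or_ge k 2 with h | h
      · right; omega
      · exact Or.inl (ha (k-1) (by omega) (by omega))
    obtain ⟨F, hF⟩ := IH a (fun j h1 h2 => ha j h1 (by omega)) (a (k-1)) hq
    rcases Nat.even_or_odd k with hpar | hpar
    · have hp : k % 2 = 0 := Nat.even_iff.mp hpar
      rcases val_cases i hi' with h | h | h | h | h <;> subst h
      · exact stepEO1 k hk hp a F hF hq
      · exact stepEO2 k hk hp a F hF hq
      · exact stepEO3 k hk hp a F hF hq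
      · exact stepEO4 k hk hp a F hF hq
      · exact stepEO5 k hk hp a F hF hq
    · have hp : k % 2 = 1 := Nat.odd_iff.mp hpar
      rcases val_cases i hi' with h | h | h | h | h <;> subst h
      · exact stepOE1 k hk hp a F hF hq
      · exact stepOE2 k hk hp a F hF hq
      · exact stepOE3 k hk hp a F hF hq
      · exact stepOE4 k hk hp a F hF hq
      · exact stepOE5 k hk hp a F hF hq


/-! ### Graph layer -/

section GraphLayer

variable {k : ℕ} (a : Fin k → ZMod 6)

local notation "Vk" => (Σ j : Fin k, ZMod ((fun _ : Fin k => 6) j))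

lemma sigma_eq {j j' : Fin k} {x : ZMod 6} {y : ZMod 6}
    (h : (⟨j, x⟩ : Vk) = ⟨j', y⟩) : j = j' ∧ x = y := by
  obtain ⟨h1, h2⟩ := Sigma.mk.inj_iff.mp h
  exact ⟨h1, by subst h1; exact eq_of_heq h2⟩

/-- the simple two-step relation -/
def R (p q : Vk) : Prop :=
  p = q ∨ snakeGlue k (fun _ => 6) a p q ∨ snakeGlue k (fun _ => 6) a q p

lemma R_trans (ha : ∀ j : Fin k, 0 < j.val → j.val + 1 < k → a j ≠ 0)
    {p q r : Vk} (h1 : R a p q) (h2 : R a q r) : R a p r := by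
  rcases h1 with rfl | hg | hg
  · exact h2
  · rcases h2 with rfl | hg' | hg'
    · exact Or.inr (Or.inl hg)
    · -- glue p q, glue q r : impossible
      exfalso
      obtain ⟨j, hj, hp, hq⟩ := hg
      obtain ⟨j', hj', hq', hr⟩ := hg'
      rw [hq] at hq'
      obtain ⟨hf, hs⟩ := sigma_eq hq'
      have hjj : j + 1 = j' := congrArg Fin.val hf
      have h0 : 0 < (⟨j', Nat.lt_of_succ_lt hj'⟩ : Fin k).val := by
        show 0 < j'; omega
      have h1 : (⟨j', Nat.lt_of_succ_lt hj'⟩ : Fin k).val + 1 < k := by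
        show j' + 1 < k; exact hj'
      exact ha _ h0 h1 hs.symm
    · -- glue p q, glue r q : p = r
      obtain ⟨j, hj, hp, hq⟩ := hg
      obtain ⟨j', hj', hr, hq'⟩ := hg'
      rw [hq] at hq'
      obtain ⟨hf, _⟩ := sigma_eq hq'
      have hjj : j + 1 = j' + 1 := congrArg Fin.val hf
      have hjj' : j = j' := by omega
      subst hjj'
      left; rw [hp, hr]
  · rcases h2 with rfl | hg' | hg'
    · exact Or.inr (Or.inr hg)
    · -- glue q p, glue q r : p = r
      obtain ⟨j, hj, hq, hp⟩ := hg
      obtain ⟨j', hj', hq', hr⟩ := hg'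
      rw [hq] at hq'
      obtain ⟨hf, _⟩ := sigma_eq hq'
      have hjj : j = j' := congrArg Fin.val hf
      subst hjj
      left; rw [hp, hr]
    · -- glue q p, glue r q : chain r → q → p : impossible
      exfalso
      obtain ⟨j, hj, hq, hp⟩ := hg
      obtain ⟨j', hj', hr, hq'⟩ := hg'
      rw [hq] at hq'
      obtain ⟨hf, hs⟩ := sigma_eq hq'
      have hjj : j = j' + 1 := congrArg Fin.val hf
      have h0 : 0 < (⟨j, Nat.lt_of_succ_lt hj⟩ : Fin k).val := by
        show 0 < j; omega
      have h1 : (⟨j, Nat.lt_of_succ_lt hj⟩ : Fin k).val + 1 < k := by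
        show j + 1 < k; exact hj
      exact ha _ h0 h1 hs
  
lemma eqvGen_R (ha : ∀ j : Fin k, 0 < j.val → j.val + 1 < k → a j ≠ 0) {p q : Vk}
    (h2 : Relation.EqvGen (snakeGlue k (fun _ => 6) a) p q) : R a p q := by
  induction h2 with
    | rel x y hxy => exact Or.inr (Or.inl hxy)
    | refl x => exact Or.inl rfl
    | symm x y _ ih =>
        rcases ih with rfl | hg | hg
        · exact Or.inl rfl
        · exact Or.inr (Or.inr hg)
        · exact Or.inr (Or.inl hg)
    | trans x y z _ _ ih1 ih2 => exact R_trans a ha ih1 ih2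

lemma eqv_iff (ha : ∀ j : Fin k, 0 < j.val → j.val + 1 < k → a j ≠ 0) (p q : Vk) :
    Quotient.mk (snakeSetoid k (fun _ => 6) a) p = Quotient.mk (snakeSetoid k (fun _ => 6) a) q
      ↔ R a p q := by
  constructor
  · intro h
    exact eqvGen_R a ha (Quotient.exact h)
  · intro h
    rcases h with rfl | hg | hg
    · rfl
    · exact Quotient.sound (Relation.EqvGen.rel _ _ hg)
    · exact Quotient.sound (Relation.EqvGen.symm _ _ (Relation.EqvGen.rel _ _ hg))

end GraphLayer

section QuotLayer

variable {k : ℕ} (a : Fin k → ZMod 6) (F : ℕ → ZMod 6 → ℕ)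

local notation "Vk" => (Σ j : Fin k, ZMod ((fun _ : Fin k => 6) j))

/-- extension of `a` to ℕ -/
def aext : ℕ → ZMod 6 := fun n => if h : n < k then a ⟨n, h⟩ else 1

lemma fQ_resp (i : ZMod 6) (hG : Good k (aext a) i F) :
    ∀ p q : Vk, Relation.EqvGen (snakeGlue k (fun _ => 6) a) p q →
      F p.1.val p.2 = F q.1.val q.2 := by
  intro p q h
  induction h with
  | rel x y hxy =>
      obtain ⟨j, hj, hp, hq⟩ := hxy
      subst hp; subst hq
      have h1 : aext a j = a ⟨j, Nat.lt_of_succ_lt hj⟩ := dif_pos (Nat.lt_of_succ_lt hj)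
      have := hG.compat j hj
      rw [h1] at this
      exact this
  | refl x => rfl
  | symm x y _ ih => exact ih.symm
  | trans x y z _ _ ih1 ih2 => exact ih1.trans ih2

variable (i : ZMod 6) (hG : Good k (aext a) i F)

/-- labelling on the quotient -/
def fQ : Quotient (snakeSetoid k (fun _ => 6) a) → ℕ :=
  Quotient.lift (fun p : Vk => F p.1.val p.2) (fQ_resp a F i hG)

lemma fQ_mk (p : Vk) :
    fQ a F i hG (Quotient.mk (snakeSetoid k (fun _ => 6) a) p) = F p.1.val p.2 := rfl

lemma fQ_inj : Function.Injective (fQ a F i hG) := by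
  intro X Y
  refine Quotient.inductionOn₂ X Y ?_
  rintro ⟨j, x⟩ ⟨j', x'⟩ h
  have h' : F j.val x = F j'.val x' := h
  rcases hG.inj j.val x j'.val x' j.isLt j'.isLt h' with ⟨h1, h2⟩ | ⟨h1, h2, h3⟩ | ⟨h1, h2, h3⟩
  · have hjj : j = j' := Fin.ext h1
    subst hjj
    have hxx : x = x' := h2
    subst hxx
    rfl
  · -- j'.val = j.val + 1, x = aext (j.val), x' = 0 : glue
    have hjlt : j.val + 1 < k := by have := j'.isLt; omega
    apply Quotient.sound
    apply Relation.EqvGen.rel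
    refine ⟨j.val, hjlt, ?_, ?_⟩
    · have e1 : (⟨j.val, Nat.lt_of_succ_lt hjlt⟩ : Fin k) = j := Fin.ext rfl
      rw [e1]
      refine congrArg (Sigma.mk j) ?_
      rw [h2]
      show aext a j.val = a j
      unfold aext
      rw [dif_pos (Nat.lt_of_succ_lt hjlt)]
    · have e2 : (⟨j.val + 1, hjlt⟩ : Fin k) = j' := Fin.ext h1.symm
      rw [e2]
      exact congrArg (Sigma.mk j') h3
  · have hjlt : j'.val + 1 < k := by have := j.isLt; omega
    apply Quotient.sound
    apply Relation.EqvGen.symm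
    apply Relation.EqvGen.rel
    refine ⟨j'.val, hjlt, ?_, ?_⟩
    · have e1 : (⟨j'.val, Nat.lt_of_succ_lt hjlt⟩ : Fin k) = j' := Fin.ext rfl
      rw [e1]
      refine congrArg (Sigma.mk j') ?_
      rw [h2]
      show aext a j'.val = a j'
      unfold aext
      rw [dif_pos (Nat.lt_of_succ_lt hjlt)]
    · have e2 : (⟨j'.val + 1, hjlt⟩ : Fin k) = j := Fin.ext h1.symm
      rw [e2]
      exact congrArg (Sigma.mk j) h3

lemma mk_edge_ne (ha : ∀ j : Fin k, 0 < j.val → j.val + 1 < k → a j ≠ 0)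
    (j : Fin k) (x : ZMod 6) :
    Quotient.mk (snakeSetoid k (fun _ => 6) a) (⟨j, x⟩ : Vk) ≠
    Quotient.mk (snakeSetoid k (fun _ => 6) a) (⟨j, x + 1⟩ : Vk) := by
  intro h
  rcases (eqv_iff a ha _ _).mp h with heq | hg | hg
  · have hne : ∀ y : ZMod 6, y ≠ y + 1 := by decide
    exact hne x (sigma_eq heq).2
  · obtain ⟨jj, hj, hp, hq⟩ := hg
    have h1 : j.val = jj := congrArg Fin.val (sigma_eq hp).1
    have h2 : j.val = jj + 1 := congrArg Fin.val (sigma_eq hq).1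
    omega
  · obtain ⟨jj, hj, hp, hq⟩ := hg
    have h1 : j.val = jj := congrArg Fin.val (sigma_eq hp).1
    have h2 : j.val = jj + 1 := congrArg Fin.val (sigma_eq hq).1
    omega

lemma mk_edge_mem (ha : ∀ j : Fin k, 0 < j.val → j.val + 1 < k → a j ≠ 0)
    (j : Fin k) (x : ZMod 6) :
    s(Quotient.mk (snakeSetoid k (fun _ => 6) a) (⟨j, x⟩ : Vk),
      Quotient.mk (snakeSetoid k (fun _ => 6) a) (⟨j, x + 1⟩ : Vk)) ∈
      (snakeGraph k (fun _ => 6) a).edgeSet := by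
  rw [SimpleGraph.mem_edgeSet]
  refine ⟨mk_edge_ne a ha j x, ⟨j, x⟩, ⟨j, x+1⟩, rfl, rfl, j, x, x+1, rfl, rfl, Or.inl rfl⟩

lemma edge_char (E : Sym2 (Quotient (snakeSetoid k (fun _ => 6) a)))
    (hE : E ∈ (snakeGraph k (fun _ => 6) a).edgeSet) :
    ∃ (j : Fin k) (x : ZMod 6),
      E = s(Quotient.mk (snakeSetoid k (fun _ => 6) a) (⟨j, x⟩ : Vk),
            Quotient.mk (snakeSetoid k (fun _ => 6) a) (⟨j, x + 1⟩ : Vk)) := by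
  induction E with
  | _ X Y =>
    rw [SimpleGraph.mem_edgeSet] at hE
    obtain ⟨hne, p, q, hp, hq, j, xx, yy, hpj, hqj, hor⟩ := hE
    subst hp; subst hq; subst hpj; subst hqj
    rcases hor with h | h
    · exact ⟨j, xx, by rw [h]⟩
    · exact ⟨j, yy, by rw [h, Sym2.eq_swap]⟩

lemma edgeLabel_fQ (j : Fin k) (x : ZMod 6) :
    edgeLabel (fQ a F i hG)
      s(Quotient.mk (snakeSetoid k (fun _ => 6) a) (⟨j, x⟩ : Vk),
        Quotient.mk (snakeSetoid k (fun _ => 6) a) (⟨j, x + 1⟩ : Vk)) = D F j.val x := by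
  simp only [edgeLabel, Sym2.lift_mk]
  rfl

lemma injOn_fQ : Set.InjOn (edgeLabel (fQ a F i hG)) (snakeGraph k (fun _ => 6) a).edgeSet := by
  intro E1 h1 E2 h2 heq
  obtain ⟨j, x, rfl⟩ := edge_char a E1 h1
  obtain ⟨j', x', rfl⟩ := edge_char a E2 h2
  rw [edgeLabel_fQ, edgeLabel_fQ] at heq
  obtain ⟨hj, hx⟩ := hG.dinj j.val x j'.val x' j.isLt j'.isLt heq
  have : j = j' := Fin.ext hj
  subst this; subst hx; rfl

lemma image_fQ (ha : ∀ j : Fin k, 0 < j.val → j.val + 1 < k → a j ≠ 0) :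
    edgeLabel (fQ a F i hG) '' (snakeGraph k (fun _ => 6) a).edgeSet =
      {v : ℕ | 1 ≤ v ∧ v ≤ Mk k ∧ (k % 2 = 1 → v ≠ 6*k)} := by
  ext v
  constructor
  · rintro ⟨E, hE, rfl⟩
    obtain ⟨j, x, rfl⟩ := edge_char a E hE
    rw [edgeLabel_fQ]
    exact hG.dmem j.val x j.isLt
  · rintro ⟨h1, h2, h3⟩
    obtain ⟨j, x, hj, hd⟩ := hG.dsurj v h1 h2 h3
    refine ⟨_, mk_edge_mem a ha ⟨j, hj⟩ x, ?_⟩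
    rw [edgeLabel_fQ]
    exact hd

end QuotLayer

section IsoTransfer

variable {V W : Type*} (G : SimpleGraph V) (H : SimpleGraph W) (e : G ≃g H) (f : W → ℕ)

lemma edgeLabel_comp (u v : V) :
    edgeLabel (fun x => f (e x)) s(u, v) = edgeLabel f (Sym2.map e s(u, v)) := by
  simp [edgeLabel]

lemma mapEdgeSet_eq : Sym2.map e '' G.edgeSet = H.edgeSet := by
  ext E
  constructor
  · rintro ⟨E0, hE0, rfl⟩
    induction E0 with
    | _ u v =>
      rw [SimpleGraph.mem_edgeSet] at hE0
      rw [Sym2.map_pair_eq, SimpleGraph.mem_edgeSet]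
      exact e.map_adj_iff.mpr hE0
  · intro hE
    refine ⟨Sym2.map e.symm E, ?_, ?_⟩
    · induction E with
      | _ u v =>
        rw [SimpleGraph.mem_edgeSet] at hE
        rw [Sym2.map_pair_eq, SimpleGraph.mem_edgeSet]
        exact e.symm.map_adj_iff.mpr hE
    · rw [Sym2.map_map]
      have : (⇑e ∘ ⇑e.symm) = id := by
        funext x; simp
      rw [this, Sym2.map_id]
      rfl

lemma image_transfer :
    edgeLabel (fun x => f (e x)) '' G.edgeSet = edgeLabel f '' H.edgeSet := by
  rw [← mapEdgeSet_eq G H e, ← Set.image_comp]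
  apply Set.image_congr
  intro E _
  induction E with
  | _ u v => exact (edgeLabel_comp G H e f u v).symm

lemma injOn_transfer (h : Set.InjOn (edgeLabel f) H.edgeSet) :
    Set.InjOn (edgeLabel (fun x => f (e x))) G.edgeSet := by
  intro E1 h1 E2 h2 heq
  have l1 : ∀ E ∈ G.edgeSet, edgeLabel (fun x => f (e x)) E = edgeLabel f (Sym2.map e E) := by
    intro E _
    induction E with
    | _ u v => exact edgeLabel_comp G H e f u v
  rw [l1 E1 h1, l1 E2 h2] at heq
  have m1 : Sym2.map e E1 ∈ H.edgeSet := by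
    rw [← mapEdgeSet_eq G H e]; exact ⟨E1, h1, rfl⟩
  have m2 : Sym2.map e E2 ∈ H.edgeSet := by
    rw [← mapEdgeSet_eq G H e]; exact ⟨E2, h2, rfl⟩
  have := h m1 m2 heq
  exact Sym2.map.injective e.injective this

end IsoTransfer


end SnakeProof


/-- For every `k ≥ 1`, every cyclic snake `kC_6` (with any string,
given here by the concrete model `snakeGraph k (fun _ => 6) a`), and every prescribed
distance `d ∈ {1, 2, 3}`, there exists a labelling of `kC_6` that is graceful if `k` is
even and near graceful if `k` is odd, in which the label `0` is assigned to a vertex of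
the last cycle lying at distance `d` from the last cut vertex (the cut vertex of the
last cycle being position `0` of cycle `k - 1`, and the vertex at cycle position `i`
lying at distance `min i (6 - i)` from it). -/
theorem stmt_11 (k : ℕ) (hk : 1 ≤ k) (a : Fin k → ZMod 6)
    (ha : ∀ j : Fin k, 0 < j.val → j.val + 1 < k → a j ≠ 0)
    (d : ℕ) (hd1 : 1 ≤ d) (hd3 : d ≤ 3)
    (V : Type*) (G : SimpleGraph V)
    (e : G ≃g snakeGraph k (fun _ => 6) a) :
    ∃ (f : V → ℕ) (i : ZMod 6),
      min i.val (6 - i.val) = d ∧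
      f (e.symm (Quotient.mk (snakeSetoid k (fun _ => 6) a) ⟨⟨k - 1, by omega⟩, i⟩)) = 0 ∧
      (Even k → IsGraceful G (6 * k) f) ∧
      (Odd k → IsNearGraceful G (6 * k) f) := by
  classical
  set i : ZMod 6 := (d : ZMod 6) with hidef
  have hival : i.val = d := by
    have hd6 : d < 6 := by omega
    simp [hidef, ZMod.val_natCast]
    omega
  have hi0 : i ≠ 0 := by
    intro h
    have : i.val = 0 := by rw [h]; rfl
    omega
  have haext : ∀ j, 0 < j → j + 1 < k → SnakeProof.aext a j ≠ 0 := by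
    intro j h1 h2
    have hjk : j < k := by omega
    show (if h : j < k then a ⟨j, h⟩ else 1) ≠ 0
    rw [dif_pos hjk]
    exact ha ⟨j, hjk⟩ h1 h2
  obtain ⟨F, hG⟩ := SnakeProof.main k hk (SnakeProof.aext a) haext i (Or.inl hi0)
  refine ⟨fun v => SnakeProof.fQ a F i hG (e v), i, ?_, ?_, ?_, ?_⟩
  · rw [hival, Nat.min_def]
    split_ifs <;> omega
  · show SnakeProof.fQ a F i hG (e (e.symm _)) = 0
    rw [RelIso.apply_symm_apply]
    exact hG.anchor
  · intro hev
    have hp : k % 2 = 0 := Nat.even_iff.mp hev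
    refine ⟨?_, ?_, ?_, ?_⟩
    · intro u v h
      exact e.toEquiv.injective (SnakeProof.fQ_inj a F i hG h)
    · intro v
      show SnakeProof.fQ a F i hG (e v) ≤ 6 * k
      have h3 : SnakeProof.fQ a F i hG (e v) ≤ SnakeProof.Mk k := by
        have : ∀ X, SnakeProof.fQ a F i hG X ≤ SnakeProof.Mk k := by
          intro X
          induction X using Quotient.inductionOn with
          | h p => exact hG.bound p.1.val p.2 p.1.isLt
        exact this (e v)
      unfold SnakeProof.Mk at h3
      omega
    · exact SnakeProof.injOn_transfer G _ e _ (SnakeProof.injOn_fQ a F i hG)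
    · rw [SnakeProof.image_transfer G _ e _, SnakeProof.image_fQ a F i hG ha]
      ext v
      simp only [Set.mem_setOf_eq, Set.mem_Icc]
      unfold SnakeProof.Mk
      constructor
      · rintro ⟨h1, h2, _⟩
        exact ⟨h1, by omega⟩
      · rintro ⟨h1, h2⟩
        exact ⟨h1, by omega, by omega⟩
  · intro hodd
    have hp : k % 2 = 1 := Nat.odd_iff.mp hodd
    refine ⟨?_, ?_, ?_, Or.inr ?_⟩
    · intro u v h
      exact e.toEquiv.injective (SnakeProof.fQ_inj a F i hG h)
    · intro v
      show SnakeProof.fQ a F i hG (e v) ≤ 6 * k + 1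
      have h3 : SnakeProof.fQ a F i hG (e v) ≤ SnakeProof.Mk k := by
        have : ∀ X, SnakeProof.fQ a F i hG X ≤ SnakeProof.Mk k := by
          intro X
          induction X using Quotient.inductionOn with
          | h p => exact hG.bound p.1.val p.2 p.1.isLt
        exact this (e v)
      unfold SnakeProof.Mk at h3
      omega
    · exact SnakeProof.injOn_transfer G _ e _ (SnakeProof.injOn_fQ a F i hG)
    · rw [SnakeProof.image_transfer G _ e _, SnakeProof.image_fQ a F i hG ha]
      ext v
      simp only [Set.mem_setOf_eq, Set.mem_diff, Set.mem_Icc, Set.mem_singleton_iff]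
      unfold SnakeProof.Mk
      constructor
      · rintro ⟨h1, h2, h3⟩
        exact ⟨⟨h1, by omega⟩, by have := h3 hp; omega⟩
      · rintro ⟨⟨h1, h2⟩, h3⟩
        exact ⟨h1, by omega, fun _ => by omega⟩
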